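/- The degree-12 discriminant curve Δ = 4p₄³ − 27p₆² = 0 is projectively equivalent to the dual curve of the Klein quartic: there exists an invertible 3×3 complex matrix M such that substituting into Δ the three coordinates of M·(∂f/∂z₀, ∂f/∂z₁, ∂f/∂z₂) yields a polynomial in ℂ[z₀,z₁,z₂] lying in the ideal generated by f; i.e. Δ(M·∇f) = h·f for some polynomial h ∈ ℂ[z₀,z₁,z₂]. -/

import Mathlib

open MvPolynomial
set_option maxHeartbeats 4000000
set_option maxRecDepth 100000

/-- `p₄ = x₀³x₁ + x₀x₂³ + x₁³x₂`. -/
noncomputable def p4 : MvPolynomial (Fin 3) ℂ :=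
  X 0 ^ 3 * X 1 + X 0 * X 2 ^ 3 + X 1 ^ 3 * X 2

/-- `p₆ = x₀⁵x₂ + x₀x₁⁵ + x₁x₂⁵ − 5x₀²x₁²x₂²`. -/
noncomputable def p6 : MvPolynomial (Fin 3) ℂ :=
  X 0 ^ 5 * X 2 + X 0 * X 1 ^ 5 + X 1 * X 2 ^ 5 - 5 * X 0 ^ 2 * X 1 ^ 2 * X 2 ^ 2

/-- The discriminant `Δ = 4p₄³ − 27p₆²` of the cubic `p₆ + p₄T − T³`. -/
noncomputable def Δ : MvPolynomial (Fin 3) ℂ := 4 * p4 ^ 3 - 27 * p6 ^ 2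

/-- The Klein quartic `f = z₀z₁³ + z₁z₂³ + z₂z₀³`. -/
noncomputable def f : MvPolynomial (Fin 3) ℂ :=
  X 0 * X 1 ^ 3 + X 1 * X 2 ^ 3 + X 2 * X 0 ^ 3

noncomputable def Ra : MvPolynomial (Fin 3) ℂ :=
  (36 : MvPolynomial (Fin 3) ℂ) * (X 1 ^ 3*X 2 ^ 9) +
  (3 : MvPolynomial (Fin 3) ℂ) * (X 1 ^ 10*X 2 ^ 2) +
  (-57 : MvPolynomial (Fin 3) ℂ) * (X 0 ^ 1*X 1 ^ 5*X 2 ^ 6) +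
  (3 : MvPolynomial (Fin 3) ℂ) * (X 0 ^ 2*X 2 ^ 10) +
  (-165 : MvPolynomial (Fin 3) ℂ) * (X 0 ^ 2*X 1 ^ 7*X 2 ^ 3) +
  (-36 : MvPolynomial (Fin 3) ℂ) * (X 0 ^ 3*X 1 ^ 9) +
  (3 : MvPolynomial (Fin 3) ℂ) * (X 0 ^ 10*X 1 ^ 2)

noncomputable def Qa : MvPolynomial (Fin 3) ℂ :=
  (-8 : MvPolynomial (Fin 3) ℂ) * (X 1 ^ 2*X 2 ^ 6) +
  (155 : MvPolynomial (Fin 3) ℂ) * (X 0 ^ 1*X 1 ^ 4*X 2 ^ 3) +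
  (64 : MvPolynomial (Fin 3) ℂ) * (X 0 ^ 2*X 1 ^ 6) +
  (62 : MvPolynomial (Fin 3) ℂ) * (X 0 ^ 3*X 1 ^ 1*X 2 ^ 4) +
  (26 : MvPolynomial (Fin 3) ℂ) * (X 0 ^ 4*X 1 ^ 3*X 2 ^ 1) +
  (28 : MvPolynomial (Fin 3) ℂ) * (X 0 ^ 6*X 2 ^ 2)

noncomputable def Rb : MvPolynomial (Fin 3) ℂ :=
  (2 : MvPolynomial (Fin 3) ℂ) * (X 1 ^ 1*X 2 ^ 17) +
  (76 : MvPolynomial (Fin 3) ℂ) * (X 1 ^ 8*X 2 ^ 10) +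
  (-278 : MvPolynomial (Fin 3) ℂ) * (X 1 ^ 15*X 2 ^ 3) +
  (-34 : MvPolynomial (Fin 3) ℂ) * (X 0 ^ 1*X 1 ^ 3*X 2 ^ 14) +
  (836 : MvPolynomial (Fin 3) ℂ) * (X 0 ^ 1*X 1 ^ 10*X 2 ^ 7) +
  (-276 : MvPolynomial (Fin 3) ℂ) * (X 0 ^ 1*X 1 ^ 17) +
  (168 : MvPolynomial (Fin 3) ℂ) * (X 0 ^ 2*X 1 ^ 5*X 2 ^ 11) +
  (1072 : MvPolynomial (Fin 3) ℂ) * (X 0 ^ 2*X 1 ^ 12*X 2 ^ 4) +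
  (36 : MvPolynomial (Fin 3) ℂ) * (X 0 ^ 8*X 1 ^ 10) +
  (-2 : MvPolynomial (Fin 3) ℂ) * (X 0 ^ 15*X 1 ^ 3)

noncomputable def Qb : MvPolynomial (Fin 3) ℂ :=
  (1 : MvPolynomial (Fin 3) ℂ) * (X 2 ^ 14) +
  (122 : MvPolynomial (Fin 3) ℂ) * (X 1 ^ 7*X 2 ^ 7) +
  (279 : MvPolynomial (Fin 3) ℂ) * (X 1 ^ 14) +
  (78 : MvPolynomial (Fin 3) ℂ) * (X 0 ^ 1*X 1 ^ 2*X 2 ^ 11) +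
  (-1228 : MvPolynomial (Fin 3) ℂ) * (X 0 ^ 1*X 1 ^ 9*X 2 ^ 4) +
  (483 : MvPolynomial (Fin 3) ℂ) * (X 0 ^ 2*X 1 ^ 4*X 2 ^ 8) +
  (-234 : MvPolynomial (Fin 3) ℂ) * (X 0 ^ 2*X 1 ^ 11*X 2 ^ 1) +
  (-1040 : MvPolynomial (Fin 3) ℂ) * (X 0 ^ 3*X 1 ^ 6*X 2 ^ 5) +
  (-468 : MvPolynomial (Fin 3) ℂ) * (X 0 ^ 4*X 1 ^ 1*X 2 ^ 9) +
  (963 : MvPolynomial (Fin 3) ℂ) * (X 0 ^ 4*X 1 ^ 8*X 2 ^ 2) +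
  (-1320 : MvPolynomial (Fin 3) ℂ) * (X 0 ^ 5*X 1 ^ 3*X 2 ^ 6) +
  (-1560 : MvPolynomial (Fin 3) ℂ) * (X 0 ^ 6*X 1 ^ 5*X 2 ^ 3) +
  (198 : MvPolynomial (Fin 3) ℂ) * (X 0 ^ 7*X 2 ^ 7) +
  (162 : MvPolynomial (Fin 3) ℂ) * (X 0 ^ 7*X 1 ^ 7) +
  (687 : MvPolynomial (Fin 3) ℂ) * (X 0 ^ 8*X 1 ^ 2*X 2 ^ 4) +
  (-432 : MvPolynomial (Fin 3) ℂ) * (X 0 ^ 9*X 1 ^ 4*X 2 ^ 1) +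
  (42 : MvPolynomial (Fin 3) ℂ) * (X 0 ^ 11*X 1 ^ 1*X 2 ^ 2) +
  (3 : MvPolynomial (Fin 3) ℂ) * (X 0 ^ 14)

noncomputable def Qc : MvPolynomial (Fin 3) ℂ :=
  (-108 : MvPolynomial (Fin 3) ℂ) * (X 1 ^ 1*X 2 ^ 31) +
  (178416 : MvPolynomial (Fin 3) ℂ) * (X 1 ^ 8*X 2 ^ 24) +
  (-79272 : MvPolynomial (Fin 3) ℂ) * (X 1 ^ 15*X 2 ^ 17) +
  (1144800 : MvPolynomial (Fin 3) ℂ) * (X 1 ^ 22*X 2 ^ 10) +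
  (-2086560 : MvPolynomial (Fin 3) ℂ) * (X 1 ^ 29*X 2 ^ 3) +
  (3780 : MvPolynomial (Fin 3) ℂ) * (X 0 ^ 1*X 1 ^ 3*X 2 ^ 28) +
  (-1015632 : MvPolynomial (Fin 3) ℂ) * (X 0 ^ 1*X 1 ^ 10*X 2 ^ 21) +
  (-3980016 : MvPolynomial (Fin 3) ℂ) * (X 0 ^ 1*X 1 ^ 17*X 2 ^ 14) +
  (12531780 : MvPolynomial (Fin 3) ℂ) * (X 0 ^ 1*X 1 ^ 24*X 2 ^ 7) +
  (-2056752 : MvPolynomial (Fin 3) ℂ) * (X 0 ^ 1*X 1 ^ 31) +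
  (-6480 : MvPolynomial (Fin 3) ℂ) * (X 0 ^ 2*X 1 ^ 5*X 2 ^ 25) +
  (590544 : MvPolynomial (Fin 3) ℂ) * (X 0 ^ 2*X 1 ^ 12*X 2 ^ 18) +
  (-17584776 : MvPolynomial (Fin 3) ℂ) * (X 0 ^ 2*X 1 ^ 19*X 2 ^ 11) +
  (16003008 : MvPolynomial (Fin 3) ℂ) * (X 0 ^ 2*X 1 ^ 26*X 2 ^ 4) +
  (108 : MvPolynomial (Fin 3) ℂ) * (X 0 ^ 3*X 2 ^ 29) +
  (-11232 : MvPolynomial (Fin 3) ℂ) * (X 0 ^ 3*X 1 ^ 7*X 2 ^ 22) +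
  (685692 : MvPolynomial (Fin 3) ℂ) * (X 0 ^ 3*X 1 ^ 14*X 2 ^ 15) +
  (-28866672 : MvPolynomial (Fin 3) ℂ) * (X 0 ^ 3*X 1 ^ 21*X 2 ^ 8) +
  (2056752 : MvPolynomial (Fin 3) ℂ) * (X 0 ^ 3*X 1 ^ 28*X 2 ^ 1) +
  (-45576 : MvPolynomial (Fin 3) ℂ) * (X 0 ^ 4*X 1 ^ 9*X 2 ^ 19) +
  (634608 : MvPolynomial (Fin 3) ℂ) * (X 0 ^ 4*X 1 ^ 16*X 2 ^ 12) +
  (-13565232 : MvPolynomial (Fin 3) ℂ) * (X 0 ^ 4*X 1 ^ 23*X 2 ^ 5) +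
  (324 : MvPolynomial (Fin 3) ℂ) * (X 0 ^ 5*X 1 ^ 4*X 2 ^ 23) +
  (38880 : MvPolynomial (Fin 3) ℂ) * (X 0 ^ 5*X 1 ^ 11*X 2 ^ 16) +
  (2049084 : MvPolynomial (Fin 3) ℂ) * (X 0 ^ 5*X 1 ^ 18*X 2 ^ 9) +
  (-2010096 : MvPolynomial (Fin 3) ℂ) * (X 0 ^ 5*X 1 ^ 25*X 2 ^ 2) +
  (-6912 : MvPolynomial (Fin 3) ℂ) * (X 0 ^ 6*X 1 ^ 6*X 2 ^ 20) +
  (403272 : MvPolynomial (Fin 3) ℂ) * (X 0 ^ 6*X 1 ^ 13*X 2 ^ 13) +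
  (1283040 : MvPolynomial (Fin 3) ℂ) * (X 0 ^ 6*X 1 ^ 20*X 2 ^ 6) +
  (48600 : MvPolynomial (Fin 3) ℂ) * (X 0 ^ 7*X 1 ^ 8*X 2 ^ 17) +
  (-610200 : MvPolynomial (Fin 3) ℂ) * (X 0 ^ 7*X 1 ^ 15*X 2 ^ 10) +
  (-365472 : MvPolynomial (Fin 3) ℂ) * (X 0 ^ 7*X 1 ^ 22*X 2 ^ 3) +
  (-324 : MvPolynomial (Fin 3) ℂ) * (X 0 ^ 8*X 1 ^ 3*X 2 ^ 21) +
  (-91368 : MvPolynomial (Fin 3) ℂ) * (X 0 ^ 8*X 1 ^ 10*X 2 ^ 14) +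
  (-1539972 : MvPolynomial (Fin 3) ℂ) * (X 0 ^ 8*X 1 ^ 17*X 2 ^ 7) +
  (349920 : MvPolynomial (Fin 3) ℂ) * (X 0 ^ 8*X 1 ^ 24) +
  (7236 : MvPolynomial (Fin 3) ℂ) * (X 0 ^ 9*X 1 ^ 5*X 2 ^ 18) +
  (-245808 : MvPolynomial (Fin 3) ℂ) * (X 0 ^ 9*X 1 ^ 12*X 2 ^ 11) +
  (-1368252 : MvPolynomial (Fin 3) ℂ) * (X 0 ^ 9*X 1 ^ 19*X 2 ^ 4) +
  (-9180 : MvPolynomial (Fin 3) ℂ) * (X 0 ^ 10*X 1 ^ 7*X 2 ^ 15) +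
  (537192 : MvPolynomial (Fin 3) ℂ) * (X 0 ^ 10*X 1 ^ 14*X 2 ^ 8) +
  (-349920 : MvPolynomial (Fin 3) ℂ) * (X 0 ^ 10*X 1 ^ 21*X 2 ^ 1) +
  (324 : MvPolynomial (Fin 3) ℂ) * (X 0 ^ 11*X 1 ^ 2*X 2 ^ 19) +
  (-47196 : MvPolynomial (Fin 3) ℂ) * (X 0 ^ 11*X 1 ^ 9*X 2 ^ 12) +
  (990468 : MvPolynomial (Fin 3) ℂ) * (X 0 ^ 11*X 1 ^ 16*X 2 ^ 5) +
  (216 : MvPolynomial (Fin 3) ℂ) * (X 0 ^ 12*X 1 ^ 4*X 2 ^ 16) +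
  (-17064 : MvPolynomial (Fin 3) ℂ) * (X 0 ^ 12*X 1 ^ 11*X 2 ^ 9) +
  (342144 : MvPolynomial (Fin 3) ℂ) * (X 0 ^ 12*X 1 ^ 18*X 2 ^ 2) +
  (-3348 : MvPolynomial (Fin 3) ℂ) * (X 0 ^ 13*X 1 ^ 6*X 2 ^ 13) +
  (63720 : MvPolynomial (Fin 3) ℂ) * (X 0 ^ 13*X 1 ^ 13*X 2 ^ 6) +
  (14904 : MvPolynomial (Fin 3) ℂ) * (X 0 ^ 14*X 1 ^ 8*X 2 ^ 10) +
  (73656 : MvPolynomial (Fin 3) ℂ) * (X 0 ^ 14*X 1 ^ 15*X 2 ^ 3) +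
  (2592 : MvPolynomial (Fin 3) ℂ) * (X 0 ^ 15*X 1 ^ 10*X 2 ^ 7) +
  (-18144 : MvPolynomial (Fin 3) ℂ) * (X 0 ^ 15*X 1 ^ 17) +
  (-324 : MvPolynomial (Fin 3) ℂ) * (X 0 ^ 16*X 1 ^ 5*X 2 ^ 11) +
  (23976 : MvPolynomial (Fin 3) ℂ) * (X 0 ^ 16*X 1 ^ 12*X 2 ^ 4) +
  (3564 : MvPolynomial (Fin 3) ℂ) * (X 0 ^ 17*X 1 ^ 7*X 2 ^ 8) +
  (18144 : MvPolynomial (Fin 3) ℂ) * (X 0 ^ 17*X 1 ^ 14*X 2 ^ 1) +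
  (-6156 : MvPolynomial (Fin 3) ℂ) * (X 0 ^ 18*X 1 ^ 9*X 2 ^ 5) +
  (324 : MvPolynomial (Fin 3) ℂ) * (X 0 ^ 19*X 1 ^ 4*X 2 ^ 9) +
  (-17820 : MvPolynomial (Fin 3) ℂ) * (X 0 ^ 19*X 1 ^ 11*X 2 ^ 2)

noncomputable def G : Fin 3 → MvPolynomial (Fin 3) ℂ :=
  ![X 1 ^ 3 + 3 * X 0 ^ 2 * X 2, 3 * X 1 * X 2 ^ 2 + X 0 ^ 3, 3 * X 0 * X 1 ^ 2 + X 2 ^ 3]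

set_option maxHeartbeats 2000000 in
lemma lemA : aeval G p4 = Ra + Qa * f := by
  simp only [p4, Ra, Qa, f, G, map_add, map_mul, map_pow, map_ofNat, aeval_X,
    Matrix.cons_val_zero, Matrix.cons_val_one, Matrix.cons_val_two, Matrix.tail_cons, Matrix.head_cons]
  ring

set_option maxHeartbeats 2000000 in
lemma lemB : aeval G p6 = Rb + Qb * f := by
  simp only [p6, Rb, Qb, f, G, map_add, map_sub, map_mul, map_pow, map_ofNat, aeval_X,
    Matrix.cons_val_zero, Matrix.cons_val_one, Matrix.cons_val_two, Matrix.tail_cons, Matrix.head_cons]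
  ring

set_option maxHeartbeats 8000000 in
lemma lemC : 4 * Ra ^ 3 - 27 * Rb ^ 2 = Qc * f := by
  simp only [Ra, Rb, Qc, f]
  ring

/-- The discriminant curve `Δ = 0` is projectively equivalent to the dual curve
of the Klein quartic: for some invertible matrix `M`, the pullback `Δ(M·∇f)` of
`Δ` along `M` composed with the Gauss map of `f` lies in the ideal `(f)`. -/
theorem discriminant_is_dual_of_Klein :
    ∃ M : Matrix (Fin 3) (Fin 3) ℂ, IsUnit M ∧
      ∃ h : MvPolynomial (Fin 3) ℂ,
        aeval (fun i : Fin 3 => ∑ j : Fin 3, C (M i j) * pderiv j f) Δ = h * f := by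
  refine ⟨!![1,0,0;0,0,1;0,1,0], ?_, Qc + 12 * Ra ^ 2 * Qa + 12 * Ra * Qa ^ 2 * f
      + 4 * Qa ^ 3 * f ^ 2 - 54 * Rb * Qb - 27 * Qb ^ 2 * f, ?_⟩
  · rw [Matrix.isUnit_iff_isUnit_det, Matrix.det_fin_three]
    simp
  · have hG : (fun i : Fin 3 => ∑ j : Fin 3, C ((!![1,0,0;0,0,1;0,1,0] : Matrix (Fin 3) (Fin 3) ℂ) i j) * pderiv j f) = G := by
      funext i
      fin_cases i <;>
        simp [Fin.sum_univ_three, G, f, pderiv_X, Pi.single_apply] <;> ring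
    rw [hG]
    have : aeval G Δ = 4 * (aeval G p4) ^ 3 - 27 * (aeval G p6) ^ 2 := by
      simp only [Δ, map_sub, map_mul, map_pow, map_ofNat]
    rw [this, lemA, lemB]
    linear_combination lemC
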